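/- Suppose y ∈ ℝ^n is a local minimizer of z ↦ ‖F(z)‖ + (μ/(p+1)!)‖z − x̄‖^{p+1}, that F(y) ≠ 0, and that ‖DF(y)ᵀ λ‖ ≥ σ‖λ‖ for all λ ∈ ℝ^m. Then (μ/p!)‖y − x̄‖^{p} ≥ σ. -/

import Mathlib

open Real Asymptotics ContinuousLinearMap

local notation "⟪" x ", " y "⟫" => @inner ℝ _ _ x y

/-- derivative of ‖f z‖ at a point where f x ≠ 0 -/
lemma aux_hasFDerivAt_norm {E F : Type*} [NormedAddCommGroup E] [NormedSpace ℝ E]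
    [NormedAddCommGroup F] [InnerProductSpace ℝ F] {f : E → F} {f' : E →L[ℝ] F} {x : E}
    (hf : HasFDerivAt f f' x) (h0 : f x ≠ 0) :
    HasFDerivAt (fun z => ‖f z‖) (‖f x‖⁻¹ • ((innerSL ℝ (f x)).comp f')) x := by
  have h1 : HasFDerivAt (fun z => ‖f z‖ ^ 2) (2 • ((innerSL ℝ (f x)).comp f')) x := hf.norm_sq
  have hne : ‖f x‖ ^ 2 ≠ 0 := pow_ne_zero 2 (norm_ne_zero_iff.mpr h0)
  have h2 := h1.sqrt hne
  have heq : (fun z => Real.sqrt (‖f z‖ ^ 2)) = fun z => ‖f z‖ :=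
    funext fun z => Real.sqrt_sq (norm_nonneg _)
  rw [heq] at h2
  convert h2 using 1
  rw [Real.sqrt_sq (norm_nonneg _)]
  ext v
  simp only [ContinuousLinearMap.coe_smul', Pi.smul_apply, ContinuousLinearMap.smul_apply,
    smul_eq_mul, one_div, pow_two, mul_inv]
  have : ‖f x‖ ≠ 0 := norm_ne_zero_iff.mpr h0
  field_simp
  ring

/-- derivative of c‖z - xb‖^(p+1) at z = xb is zero (p ≥ 1). -/
lemma aux_hasFDerivAt_pow_zero {E : Type*} [NormedAddCommGroup E] [NormedSpace ℝ E]
    (xb : E) (c : ℝ) (p : ℕ) (hp : 1 ≤ p) :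
    HasFDerivAt (fun z => c * ‖z - xb‖ ^ (p + 1)) (0 : E →L[ℝ] ℝ) xb := by
  rw [hasFDerivAt_iff_isLittleO_nhds_zero]
  have : (fun h : E => c * ‖xb + h - xb‖ ^ (p + 1) - c * ‖xb - xb‖ ^ (p + 1)
      - (0 : E →L[ℝ] ℝ) h) = fun h : E => c * ‖h‖ ^ (p + 1) := by
    funext h; simp
  rw [this, Asymptotics.isLittleO_iff]
  intro ε hε
  rw [Metric.eventually_nhds_iff]
  refine ⟨min 1 (ε / (|c| + 1)), lt_min one_pos (div_pos hε (by positivity)), fun {h} hd => ?_⟩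
  rw [dist_zero_right] at hd
  have h1 : ‖h‖ < 1 := lt_of_lt_of_le hd (min_le_left _ _)
  have h2 : ‖h‖ < ε / (|c| + 1) := lt_of_lt_of_le hd (min_le_right _ _)
  have hnn : (0:ℝ) ≤ ‖h‖ := norm_nonneg _
  have hpow : ‖h‖ ^ (p + 1) ≤ ‖h‖ ^ 2 := pow_le_pow_of_le_one hnn h1.le (by omega)
  have habs : ‖c * ‖h‖ ^ (p + 1)‖ = |c| * ‖h‖ ^ (p + 1) := by
    rw [norm_mul, Real.norm_eq_abs, Real.norm_eq_abs, abs_of_nonneg (pow_nonneg hnn _)]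
  rw [habs]
  have h3 : ‖h‖ * (|c| + 1) < ε := (lt_div_iff₀ (by positivity)).mp h2
  nlinarith [abs_nonneg c, hnn, hpow, sq_nonneg ‖h‖, mul_le_mul_of_nonneg_left hpow (abs_nonneg c)]

/-- if `y` is a local minimizer of `z ↦ ‖F(z)‖ + (μ/(p+1)!)‖z − x̄‖^{p+1}`
with `F(y) ≠ 0`, and the Jacobian of `F` at `y` is `σ`-nondegenerate
(`‖DF(y)ᵀλ‖ ≥ σ‖λ‖` for all `λ`), then `(μ/p!)‖y − x̄‖^p ≥ σ`. -/
theorem stmt15 {n m : ℕ} (hn : 1 ≤ n) (hm : 1 ≤ m)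
    (F : EuclideanSpace ℝ (Fin n) → EuclideanSpace ℝ (Fin m))
    (hF : ContDiff ℝ 1 F)
    (xb y : EuclideanSpace ℝ (Fin n)) (μ σ : ℝ) (hμ : 0 < μ) (hσ : 0 < σ)
    (p : ℕ) (hp : 1 ≤ p)
    (hmin : IsLocalMin
      (fun z => ‖F z‖ + μ / (Nat.factorial (p + 1) : ℝ) * ‖z - xb‖ ^ (p + 1)) y)
    (hFy : F y ≠ 0)
    (hnd : ∀ lam : EuclideanSpace ℝ (Fin m),
      σ * ‖lam‖ ≤ ‖ContinuousLinearMap.adjoint (fderiv ℝ F y) lam‖) :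
    σ ≤ μ / (Nat.factorial p : ℝ) * ‖y - xb‖ ^ p := by
  set c : ℝ := μ / (Nat.factorial (p + 1) : ℝ) with hc
  have hc0 : 0 < c := div_pos hμ (by positivity)
  set F' := fderiv ℝ F y with hF'
  have hFder : HasFDerivAt F F' y :=
    ((hF.differentiable one_ne_zero) y).hasFDerivAt
  have hr : (0:ℝ) < ‖F y‖ := norm_pos_iff.mpr hFy
  set lam : EuclideanSpace ℝ (Fin m) := ‖F y‖⁻¹ • F y with hlam
  have hlamnorm : ‖lam‖ = 1 := by
    rw [hlam, norm_smul, norm_inv, norm_norm, inv_mul_cancel₀ hr.ne']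
  have D1 : HasFDerivAt (fun z => ‖F z‖) (‖F y‖⁻¹ • ((innerSL ℝ (F y)).comp F')) y :=
    aux_hasFDerivAt_norm hFder hFy
  -- key : the adjoint applied to lam
  by_cases hyx : y = xb
  · -- y = xb : contradiction with σ > 0
    exfalso
    have D2 : HasFDerivAt (fun z => c * ‖z - xb‖ ^ (p + 1)) (0 : _ →L[ℝ] ℝ) y := by
      rw [hyx]; exact aux_hasFDerivAt_pow_zero xb c p hp
    have hz := hmin.hasFDerivAt_eq_zero (D1.add D2)
    have hkey : ∀ v, ⟪lam, F' v⟫ = 0 := by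
      intro v
      have := congrFun (congrArg DFunLike.coe hz) v
      simp only [ContinuousLinearMap.add_apply, ContinuousLinearMap.coe_smul',
        Pi.smul_apply, ContinuousLinearMap.coe_comp', Function.comp_apply,
        innerSL_apply_apply, ContinuousLinearMap.zero_apply, add_zero, smul_eq_mul] at this
      rw [hlam, real_inner_smul_left]
      simpa using this
    have hadj : ContinuousLinearMap.adjoint F' lam = 0 := by
      apply ext_inner_right ℝ
      intro v
      rw [ContinuousLinearMap.adjoint_inner_left]
      simpa using hkey v
    have := hnd lam
    rw [hadj, hlamnorm, mul_one, norm_zero] at this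
    exact absurd this (not_le.mpr hσ)
  · -- y ≠ xb
    have hs : (0:ℝ) < ‖y - xb‖ := norm_pos_iff.mpr (sub_ne_zero.mpr hyx)
    set s : ℝ := ‖y - xb‖ with hss
    -- derivative of z ↦ ‖z - xb‖
    have hsub : HasFDerivAt (fun z : EuclideanSpace ℝ (Fin n) => z - xb)
        (ContinuousLinearMap.id ℝ _) y := (hasFDerivAt_id y).sub_const xb
    have Dn : HasFDerivAt (fun z : EuclideanSpace ℝ (Fin n) => ‖z - xb‖)
        (s⁻¹ • ((innerSL ℝ (y - xb)).comp (ContinuousLinearMap.id ℝ _))) y :=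
      aux_hasFDerivAt_norm hsub (sub_ne_zero.mpr hyx)
    have Dp : HasFDerivAt (fun z : EuclideanSpace ℝ (Fin n) => ‖z - xb‖ ^ (p + 1))
        ((((p + 1 : ℕ) : ℝ) * s ^ p) •
          (s⁻¹ • ((innerSL ℝ (y - xb)).comp (ContinuousLinearMap.id ℝ _)))) y := by
      have := (hasDerivAt_pow (p + 1) s).comp_hasFDerivAt y Dn
      simpa [Function.comp_def] using this
    have D2 : HasFDerivAt (fun z => c * ‖z - xb‖ ^ (p + 1))
        (c • ((((p + 1 : ℕ) : ℝ) * s ^ p) •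
          (s⁻¹ • ((innerSL ℝ (y - xb)).comp (ContinuousLinearMap.id ℝ _))))) y :=
      Dp.const_mul c
    have hz := hmin.hasFDerivAt_eq_zero (D1.add D2)
    set k : ℝ := c * (((p + 1 : ℕ) : ℝ) * s ^ p) * s⁻¹ with hk
    have hkey : ∀ v, ⟪lam, F' v⟫ = ⟪(-k) • (y - xb), v⟫ := by
      intro v
      have := congrFun (congrArg DFunLike.coe hz) v
      simp only [ContinuousLinearMap.add_apply, ContinuousLinearMap.coe_smul',
        Pi.smul_apply, ContinuousLinearMap.coe_comp', Function.comp_apply,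
        innerSL_apply_apply, ContinuousLinearMap.zero_apply, smul_eq_mul,
        ContinuousLinearMap.coe_id', id_eq] at this
      rw [hlam, real_inner_smul_left, real_inner_smul_left, hk]
      linarith [this]
    have hadj : ContinuousLinearMap.adjoint F' lam = (-k) • (y - xb) := by
      apply ext_inner_right ℝ
      intro v
      rw [ContinuousLinearMap.adjoint_inner_left]
      exact hkey v
    have hnorm : ‖ContinuousLinearMap.adjoint F' lam‖ = k * s := by
      rw [hadj, norm_smul, ← hss]
      have hk0 : 0 ≤ k := by
        rw [hk]; positivity
      rw [norm_neg, Real.norm_eq_abs, abs_of_nonneg hk0]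
    have hks : k * s = μ / (Nat.factorial p : ℝ) * s ^ p := by
      rw [hk, hc]
      have hfac : ((Nat.factorial (p + 1) : ℝ)) = ((p + 1 : ℕ) : ℝ) * (Nat.factorial p : ℝ) := by
        rw [Nat.factorial_succ]; push_cast; ring
      have h1 : ((p + 1 : ℕ) : ℝ) ≠ 0 := by positivity
      have h2 : (Nat.factorial p : ℝ) ≠ 0 := by positivity
      rw [hfac]
      field_simp [hfac]
    have := hnd lam
    rw [hlamnorm, mul_one, hnorm, hks] at this
    exact this
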